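/- Let G be a permutation group on a finite set Ω of size n, and let 1 ≤ k ≤ l ≤ n with l < n. If for every partial transformation t of Ω with |dom(t)| = l and rank(t) = k, the semigroup ⟨G,t⟩ is regular, then G has the (k,l)-universal transversal property. -/

import Mathlib

variable {Ω : Type*} [Fintype Ω] [DecidableEq Ω]

/-- A partial transformation of `Ω`, encoded as a function `Ω → Option Ω`. -/
def PT (Ω : Type*) := Ω → Option Ω

/-- Composition of partial transformations: apply `f` first, then `g`. -/
def pcomp (f g : PT Ω) : PT Ω := fun x => (f x).bind g

/-- A permutation viewed as a (total) partial transformation. -/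
def ofPerm (g : Equiv.Perm Ω) : PT Ω := fun x => some (g x)

/-- The rank of a partial transformation: the cardinality of its image. -/
noncomputable def rank (u : PT Ω) : ℕ := {y : Ω | ∃ x : Ω, u x = some y}.ncard

/-- The domain of a partial transformation. -/
def dom (u : PT Ω) : Set Ω := {x : Ω | u x ≠ none}

/-- Membership in the subsemigroup of `PT Ω` generated by a set `S`. -/
inductive InGen (S : Set (PT Ω)) : PT Ω → Prop
  | base {s : PT Ω} : s ∈ S → InGen S s
  | mul {a b : PT Ω} : InGen S a → InGen S b → InGen S (pcomp a b)

/-- The generating set consisting of the permutations of `G` together with `t`. -/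
def gens (G : Subgroup (Equiv.Perm Ω)) (t : PT Ω) : Set (PT Ω) :=
  {f : PT Ω | (∃ g ∈ G, f = ofPerm g) ∨ f = t}

variable {Ω : Type*} [Fintype Ω] [DecidableEq Ω]

/-- `P` is a partition of the finite set `B` into exactly `k` nonempty parts. -/
def IsKPartition (P : Finset (Finset Ω)) (B : Finset Ω) (k : ℕ) : Prop :=
  P.card = k ∧ (∀ p ∈ P, p.Nonempty) ∧
    (∀ p ∈ P, ∀ q ∈ P, p ≠ q → Disjoint p q) ∧ P.biUnion id = B

/-- `G` has the `(k,l)`-universal transversal property. -/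
def HasUT (G : Subgroup (Equiv.Perm Ω)) (k l : ℕ) : Prop :=
  ∀ A B : Finset Ω, A.card = k → B.card = l →
    ∀ P : Finset (Finset Ω), IsKPartition P B k →
      ∃ g ∈ G, ∀ p ∈ P, ((A.image g) ∩ p).card = 1

/-- `G` is `m`-homogeneous. -/
def IsHomogeneous (G : Subgroup (Equiv.Perm Ω)) (m : ℕ) : Prop :=
  ∀ A B : Finset Ω, A.card = m → B.card = m → ∃ g ∈ G, A.image g = B

/-- Every element of the subsemigroup generated by `S` is regular in it. -/
def IsRegularSemigroup (S : Set (PT Ω)) : Prop :=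
  ∀ v : PT Ω, InGen S v → ∃ b : PT Ω, InGen S b ∧ v = pcomp (pcomp v b) v

lemma pcomp_assoc (a b c : PT Ω) : pcomp (pcomp a b) c = pcomp a (pcomp b c) := by
  funext x
  simp only [pcomp]
  cases a x <;> rfl

lemma ofPerm_pcomp (g g' : Equiv.Perm Ω) : pcomp (ofPerm g) (ofPerm g') = ofPerm (g' * g) := by
  funext x
  rfl

lemma pcomp_ofPerm_one (u : PT Ω) : pcomp u (ofPerm 1) = u := by
  funext x
  cases h : u x <;> simp [pcomp, ofPerm, h] <;> rfl

lemma ofPerm_one_pcomp (u : PT Ω) : pcomp (ofPerm 1) u = u := by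
  funext x
  simp [pcomp, ofPerm] <;> rfl

lemma decomp (G : Subgroup (Equiv.Perm Ω)) (t : PT Ω) {v : PT Ω}
    (hv : InGen (gens G t) v) :
    ∃ g ∈ G, v = ofPerm g ∨ ∃ w, InGen (gens G t) w ∧ v = pcomp (ofPerm g) (pcomp t w) := by
  induction hv with
  | base hs =>
    rcases hs with ⟨g, hg, rfl⟩ | rfl
    · exact ⟨g, hg, Or.inl rfl⟩
    · refine ⟨1, one_mem G, Or.inr ⟨ofPerm 1, InGen.base (Or.inl ⟨1, one_mem G, rfl⟩), ?_⟩⟩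
      rw [pcomp_ofPerm_one, ofPerm_one_pcomp]
  | mul ha hb iha ihb =>
    obtain ⟨g, hg, hcase⟩ := iha
    rcases hcase with rfl | ⟨w, hw, rfl⟩
    · obtain ⟨g', hg', hcase'⟩ := ihb
      rcases hcase' with rfl | ⟨w', hw', rfl⟩
      · exact ⟨g' * g, mul_mem hg' hg, Or.inl (ofPerm_pcomp g g')⟩
      · refine ⟨g' * g, mul_mem hg' hg, Or.inr ⟨w', hw', ?_⟩⟩
        rw [← pcomp_assoc, ofPerm_pcomp]
    · refine ⟨g, hg, Or.inr ⟨pcomp w _, InGen.mul hw hb, ?_⟩⟩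
      rw [pcomp_assoc, pcomp_assoc]

theorem regular_implies_ut (G : Subgroup (Equiv.Perm Ω)) (k l : ℕ)
    (hk : 1 ≤ k) (hkl : k ≤ l) (hln : l < Fintype.card Ω)
    (h : ∀ t : PT Ω, (dom t).ncard = l → rank t = k → IsRegularSemigroup (gens G t)) :
    HasUT G k l := by
  classical
  intro A B hA hB P hPart
  obtain ⟨hPcard, hPne, hPdisj, hPunion⟩ := hPart
  have hPA : P.card = A.card := by rw [hPcard, hA]
  let e : {p // p ∈ P} ≃ {a // a ∈ A} := Finset.equivOfCardEq hPA
  let t : PT Ω := fun x =>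
    if h : ∃ p ∈ P, x ∈ p then some ((e ⟨h.choose, h.choose_spec.1⟩ : {a // a ∈ A}) : Ω)
    else none
  have tapp : ∀ x, t x =
      if h : ∃ p ∈ P, x ∈ p then some ((e ⟨h.choose, h.choose_spec.1⟩ : {a // a ∈ A}) : Ω)
      else none := fun _ => rfl
  -- t maps each element of a part p to the label of p
  have htx : ∀ p (hp : p ∈ P), ∀ x ∈ p, t x = some ((e ⟨p, hp⟩ : {a // a ∈ A}) : Ω) := by
    intro p hp x hx
    have hex : ∃ q ∈ P, x ∈ q := ⟨p, hp, hx⟩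
    have hq : hex.choose = p := by
      by_contra hne
      exact (Finset.disjoint_left.mp
        (hPdisj _ hex.choose_spec.1 p hp hne)) hex.choose_spec.2 hx
    rw [tapp, dif_pos hex]
    exact congrArg (fun s => some ((e s : {a // a ∈ A}) : Ω)) (Subtype.ext hq)
  -- values of t come from labels of parts
  have htx' : ∀ x c, t x = some c →
      ∃ (p : Finset Ω) (hp : p ∈ P), x ∈ p ∧ c = ((e ⟨p, hp⟩ : {a // a ∈ A}) : Ω) := by
    intro x c hc
    by_cases hex : ∃ p ∈ P, x ∈ p
    · refine ⟨hex.choose, hex.choose_spec.1, hex.choose_spec.2, ?_⟩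
      rw [tapp, dif_pos hex] at hc
      exact (Option.some.inj hc).symm
    · rw [tapp, dif_neg hex] at hc
      exact absurd hc (by simp)
  have hmemB : ∀ x, (∃ p ∈ P, x ∈ p) ↔ x ∈ B := by
    intro x
    rw [← hPunion]
    simp [Finset.mem_biUnion]
  have hdom : dom t = ↑B := by
    ext x
    simp only [dom, Set.mem_setOf_eq, tapp, Finset.mem_coe]
    by_cases hex : ∃ p ∈ P, x ∈ p
    · simp [dif_pos hex, (hmemB x).mp hex]
    · rw [dif_neg hex]
      constructor
      · intro hc; exact absurd rfl hc
      · intro hxB; exact absurd ((hmemB x).mpr hxB) hex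
  have himg : {y : Ω | ∃ x : Ω, t x = some y} = ↑A := by
    ext y
    simp only [Set.mem_setOf_eq, Finset.mem_coe]
    constructor
    · rintro ⟨x, hx⟩
      obtain ⟨p, hp, _, rfl⟩ := htx' x y hx
      exact (e ⟨p, hp⟩).2
    · intro hy
      obtain ⟨x, hx⟩ := hPne _ (e.symm ⟨y, hy⟩).2
      refine ⟨x, ?_⟩
      rw [htx _ (e.symm ⟨y, hy⟩).2 x hx]
      congr 1
      have : (⟨(e.symm ⟨y, hy⟩ : {p // p ∈ P}).1, (e.symm ⟨y, hy⟩).2⟩ :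
          {p // p ∈ P}) = e.symm ⟨y, hy⟩ := rfl
      rw [this, e.apply_symm_apply]
  have hdoml : (dom t).ncard = l := by rw [hdom, Set.ncard_coe_finset, hB]
  have hrank : rank t = k := by rw [rank, himg, Set.ncard_coe_finset, hA]
  obtain ⟨b, hbIn, hbt⟩ := h t hdoml hrank t (InGen.base (Or.inr rfl))
  -- key: for every a in A there is z with b a = some z and t z = some a
  have hkey : ∀ a ∈ A, ∃ z, b a = some z ∧ t z = some a := by
    intro a ha
    have : a ∈ {y : Ω | ∃ x : Ω, t x = some y} := by rw [himg]; exact ha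
    obtain ⟨x, hx⟩ := this
    have hcomp : ((t x).bind b).bind t = some a := by
      have := congrFun hbt x
      simp only [pcomp] at this
      rw [← this, hx]
    rw [hx] at hcomp
    change (b a).bind t = some a at hcomp
    cases hz : b a with
    | none => rw [hz] at hcomp; exact absurd (show (none : Option Ω) = some a from hcomp).symm (Option.some_ne_none a)
    | some z =>
      rw [hz] at hcomp
      exact ⟨z, rfl, hcomp⟩
  obtain ⟨g, hg, hcase⟩ := decomp G t hbIn
  -- main: g a is in the domain of t for a ∈ A, and a ↦ t (g a) is injective on A
  have hmain : (∀ a ∈ A, ∃ c, t (g a) = some c) ∧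
      (∀ a₁ ∈ A, ∀ a₂ ∈ A, t (g a₁) = t (g a₂) → a₁ = a₂) := by
    rcases hcase with rfl | ⟨w, hw, rfl⟩
    · constructor
      · intro a ha
        obtain ⟨z, hz, htz⟩ := hkey a ha
        have hz' : z = g a := (Option.some.inj hz).symm
        rw [hz'] at htz
        exact ⟨a, htz⟩
      · intro a₁ h1 a₂ h2 heq
        obtain ⟨z1, hz1, ht1⟩ := hkey a₁ h1
        obtain ⟨z2, hz2, ht2⟩ := hkey a₂ h2
        have hz1' : z1 = g a₁ := (Option.some.inj hz1).symm
        have hz2' : z2 = g a₂ := (Option.some.inj hz2).symm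
        rw [hz1'] at ht1; rw [hz2'] at ht2
        rw [ht1, ht2] at heq
        exact Option.some.inj heq
    · have hb : ∀ a : Ω, pcomp (ofPerm g) (pcomp t w) a = (t (g a)).bind w := by
        intro a
        rfl
      constructor
      · intro a ha
        obtain ⟨z, hz, htz⟩ := hkey a ha
        rw [hb] at hz
        cases hc : t (g a) with
        | none => rw [hc] at hz; exact absurd (show (none : Option Ω) = some z from hz).symm (Option.some_ne_none z)
        | some c => exact ⟨c, rfl⟩
      · intro a₁ h1 a₂ h2 heq
        obtain ⟨z1, hz1, ht1⟩ := hkey a₁ h1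
        obtain ⟨z2, hz2, ht2⟩ := hkey a₂ h2
        rw [hb] at hz1 hz2
        rw [heq] at hz1
        rw [hz1] at hz2
        have : z1 = z2 := Option.some.inj hz2
        rw [this] at ht1
        rw [ht1] at ht2
        exact Option.some.inj ht2
  obtain ⟨hex, hinj⟩ := hmain
  refine ⟨g, hg, ?_⟩
  have hcA : ∀ (a : Ω), ∀ c, t (g a) = some c → c ∈ A := by
    intro a c hc
    obtain ⟨q, hq, _, rfl⟩ := htx' _ _ hc
    exact (e ⟨q, hq⟩).2
  let F : {a // a ∈ A} → {a // a ∈ A} := fun a =>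
    ⟨(hex a a.2).choose, hcA a _ (hex a a.2).choose_spec⟩
  have hF : ∀ a : {a // a ∈ A}, t (g a) = some (F a : Ω) := fun a => (hex a a.2).choose_spec
  have hFinj : Function.Injective F := by
    intro a₁ a₂ hFe
    apply Subtype.ext
    apply hinj _ a₁.2 _ a₂.2
    rw [hF a₁, hF a₂, hFe]
  have hFsurj : Function.Surjective F := Finite.surjective_of_injective hFinj
  intro p hp
  obtain ⟨a, hFa⟩ := hFsurj (e ⟨p, hp⟩)
  have hta : t (g (a : Ω)) = some ((e ⟨p, hp⟩ : {a // a ∈ A}) : Ω) := by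
    rw [hF a, hFa]
  obtain ⟨q, hq, hgaq, heqc⟩ := htx' _ _ hta
  have hqp : q = p := by
    have h1 : (e ⟨p, hp⟩ : {a // a ∈ A}) = e ⟨q, hq⟩ := Subtype.ext heqc
    have h2 : (⟨p, hp⟩ : {p // p ∈ P}) = ⟨q, hq⟩ := e.injective h1
    exact (congrArg Subtype.val h2).symm
  rw [Finset.card_eq_one]
  refine ⟨g (a : Ω), ?_⟩
  ext x
  simp only [Finset.mem_inter, Finset.mem_image, Finset.mem_singleton]
  constructor
  · rintro ⟨⟨a', ha', rfl⟩, hxp⟩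
    have ht1 : t (g a') = some ((e ⟨p, hp⟩ : {a // a ∈ A}) : Ω) := htx p hp _ hxp
    have : a' = (a : Ω) := hinj _ ha' _ a.2 (by rw [ht1, hta])
    rw [this]
  · rintro rfl
    refine ⟨⟨(a : Ω), a.2, rfl⟩, ?_⟩
    rw [← hqp]
    exact hgaq
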